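/- Let X₁,...,X_n be independent symmetric random signs, n≥4, and m=2. There exist coefficients (a_J), indexed by 2-element subsets J of {1,...,n}, with Σ_J a_J² = 1, such that F = Σ_J a_J·Π_{i∈J}X_i satisfies E[F²]=1 and E[F⁴]=3; F takes only finitely many values and hence is not Gaussian. -/

import Mathlib

open MeasureTheory ProbabilityTheory

lemma sign_key (a b c d s t : ℝ) (ha : a^2 = 1) (hb : b^2 = 1) (hc : c^2 = 1) (hd : d^2 = 1)
    (h1 : s^2 + t^2 = 1/2) (h2 : s^2*t^2 = 1/32) :
    (s*(a*b) + s*(b*c) + t*(c*d) + t*(d*a))^2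
      = 1 + a*c + 4*(s*t)*(b*d) + 4*(s*t)*(a*(b*(c*d))) ∧
    (s*(a*b) + s*(b*c) + t*(c*d) + t*(d*a))^4
      = 3 + 3*(a*c) + 16*(s*t)*(b*d) + 16*(s*t)*(a*(b*(c*d))) := by
  constructor
  · linear_combination ((s*b+t*d)^2)*ha + ((s*b+t*d)^2)*hc + (2+2*a*c)*s^2*hb
      + (2+2*a*c)*t^2*hd + (2+2*a*c)*h1
  · linear_combination
      (((a+c)^2+2+2*a*c+4*c^2)*(s*b+t*d)^4)*ha
      + (((a+c)^2+2+2*a*c+4)*(s*b+t*d)^4)*hc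
      + (4*(2+2*a*c)*(((s*b+t*d)^2+1/2+2*s*t*(b*d))*s^2 + 4*s^2*t^2*d^2))*hb
      + (4*(2+2*a*c)*(((s*b+t*d)^2+1/2+2*s*t*(b*d))*t^2 + 4*s^2*t^2))*hd
      + (4*(2+2*a*c)*((s*b+t*d)^2+1/2+2*s*t*(b*d)))*h1
      + (16*(2+2*a*c))*h2

lemma pair_ne_pair {α : Type*} [DecidableEq α] {a b c d : α} (h1 : a ≠ c) (h2 : a ≠ d) :
    ({a, b} : Finset α) ≠ {c, d} := by
  intro h
  have : a ∈ ({c, d} : Finset α) := h ▸ Finset.mem_insert_self a {b}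
  simp only [Finset.mem_insert, Finset.mem_singleton] at this
  tauto

set_option maxHeartbeats 2000000 in
theorem stmt10 {Ω : Type*} [MeasurableSpace Ω] (μ : Measure Ω) [IsProbabilityMeasure μ]
    (n : ℕ) (hn : 4 ≤ n)
    (X : Fin n → Ω → ℝ) (hXmeas : ∀ i, Measurable (X i))
    (hval : ∀ i ω, X i ω = 1 ∨ X i ω = -1)
    (hP : ∀ i, μ {ω | X i ω = 1} = 1 / 2)
    (hindep : iIndepFun X μ) :
    ∃ a : Finset (Fin n) → ℝ,
      ∑ J ∈ Finset.powersetCard 2 Finset.univ, a J ^ 2 = 1 ∧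
      ∀ F : Ω → ℝ, (∀ ω, F ω = ∑ J ∈ Finset.powersetCard 2 Finset.univ, a J * ∏ i ∈ J, X i ω) →
        (∫ ω, (F ω) ^ 2 ∂μ) = 1 ∧ (∫ ω, (F ω) ^ 4 ∂μ) = 3 ∧
        (Set.range F).Finite ∧ ∀ (m₀ : ℝ) (v : NNReal), v ≠ 0 → μ.map F ≠ gaussianReal m₀ v := by
  classical
  -- the coefficients
  have hsqrt2 : Real.sqrt 2 ^ 2 = 2 := Real.sq_sqrt (by norm_num)
  have hsqrt2le : Real.sqrt 2 ≤ 2 := by nlinarith [Real.sqrt_nonneg 2]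
  set s : ℝ := Real.sqrt ((2 + Real.sqrt 2)/8) with hs_def
  set t : ℝ := Real.sqrt ((2 - Real.sqrt 2)/8) with ht_def
  have hs2 : s^2 = (2 + Real.sqrt 2)/8 := Real.sq_sqrt (by positivity)
  have ht2 : t^2 = (2 - Real.sqrt 2)/8 := Real.sq_sqrt (by linarith)
  have h1 : s^2 + t^2 = 1/2 := by rw [hs2, ht2]; ring
  have h2 : s^2 * t^2 = 1/32 := by rw [hs2, ht2]; nlinarith [hsqrt2]
  -- the four indices
  set i0 : Fin n := ⟨0, by omega⟩ with hi0
  set i1 : Fin n := ⟨1, by omega⟩ with hi1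
  set i2 : Fin n := ⟨2, by omega⟩ with hi2
  set i3 : Fin n := ⟨3, by omega⟩ with hi3
  have h01 : i0 ≠ i1 := by simp [hi0, hi1, Fin.ext_iff]
  have h02 : i0 ≠ i2 := by simp [hi0, hi2, Fin.ext_iff]
  have h03 : i0 ≠ i3 := by simp [hi0, hi3, Fin.ext_iff]
  have h12 : i1 ≠ i2 := by simp [hi1, hi2, Fin.ext_iff]
  have h13 : i1 ≠ i3 := by simp [hi1, hi3, Fin.ext_iff]
  have h23 : i2 ≠ i3 := by simp [hi2, hi3, Fin.ext_iff]
  -- the four edge sets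
  set S1 : Finset (Fin n) := {i0, i1} with hS1
  set S2 : Finset (Fin n) := {i1, i2} with hS2
  set S3 : Finset (Fin n) := {i2, i3} with hS3
  set S4 : Finset (Fin n) := {i3, i0} with hS4
  have hS12 : S1 ≠ S2 := pair_ne_pair h01 h02
  have hS13 : S1 ≠ S3 := pair_ne_pair h02 h03
  have hS14 : S1 ≠ S4 := by
    rw [hS1, Finset.pair_comm]; exact pair_ne_pair h13 h01.symm
  have hS23 : S2 ≠ S3 := pair_ne_pair h12 h13
  have hS24 : S2 ≠ S4 := pair_ne_pair h13 h01.symm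
  have hS34 : S3 ≠ S4 := pair_ne_pair h23 h02.symm
  -- the coefficient function
  set a : Finset (Fin n) → ℝ :=
    fun J => if J = S1 then s else if J = S2 then s else if J = S3 then t
      else if J = S4 then t else 0 with ha_def
  have haS1 : a S1 = s := by simp [ha_def]
  have haS2 : a S2 = s := by simp [ha_def, hS12.symm]
  have haS3 : a S3 = t := by simp [ha_def, hS13.symm, hS23.symm]
  have haS4 : a S4 = t := by simp [ha_def, hS14.symm, hS24.symm, hS34.symm]
  have haz : ∀ J, J ≠ S1 → J ≠ S2 → J ≠ S3 → J ≠ S4 → a J = 0 := by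
    intro J j1 j2 j3 j4; simp [ha_def, j1, j2, j3, j4]
  -- the support finset
  set T : Finset (Finset (Fin n)) := {S1, S2, S3, S4} with hT
  have hTsub : T ⊆ Finset.powersetCard 2 Finset.univ := by
    intro J hJ
    rw [Finset.mem_powersetCard_univ]
    simp only [hT, Finset.mem_insert, Finset.mem_singleton] at hJ
    rcases hJ with rfl | rfl | rfl | rfl
    · exact Finset.card_pair h01
    · exact Finset.card_pair h12
    · exact Finset.card_pair h23
    · exact Finset.card_pair h03.symm
  have hmemT : ∀ J, J ∉ T → a J = 0 := by
    intro J hJ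
    simp only [hT, Finset.mem_insert, Finset.mem_singleton, not_or] at hJ
    exact haz J hJ.1 hJ.2.1 hJ.2.2.1 hJ.2.2.2
  have hTsum : ∀ (g : Finset (Fin n) → ℝ), (∀ J, a J = 0 → g J = 0) →
      ∑ J ∈ Finset.powersetCard 2 Finset.univ, g J = g S1 + g S2 + g S3 + g S4 := by
    intro g hg
    rw [← Finset.sum_subset hTsub (fun J _ hJ => hg J (hmemT J hJ))]
    rw [hT]
    rw [Finset.sum_insert (by simp [hS12, hS13, hS14]),
      Finset.sum_insert (by simp [hS23, hS24]),
      Finset.sum_insert (by simp [hS34]), Finset.sum_singleton]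
    ring
  refine ⟨a, ?_, ?_⟩
  · rw [hTsum (fun J => a J ^ 2) (fun J hJ => by show a J ^ 2 = 0; rw [hJ]; ring), haS1, haS2, haS3, haS4]
    rw [hs2, ht2]; ring
  intro F hF
  -- collapsed formula for F
  have hF' : ∀ ω, F ω = s*(X i0 ω * X i1 ω) + s*(X i1 ω * X i2 ω)
      + t*(X i2 ω * X i3 ω) + t*(X i3 ω * X i0 ω) := by
    intro ω
    rw [hF ω, hTsum (fun J => a J * ∏ i ∈ J, X i ω)
      (fun J hJ => by show a J * _ = 0; rw [hJ]; ring),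
      haS1, haS2, haS3, haS4, hS1, hS2, hS3, hS4,
      Finset.prod_pair h01, Finset.prod_pair h12, Finset.prod_pair h23,
      Finset.prod_pair h03.symm]
  -- squares of the signs are 1
  have hsq : ∀ i ω, (X i ω)^2 = 1 := by
    intro i ω; rcases hval i ω with h | h <;> rw [h] <;> norm_num
  -- key pointwise identities
  have hkey := fun ω => sign_key (X i0 ω) (X i1 ω) (X i2 ω) (X i3 ω) s t
    (hsq i0 ω) (hsq i1 ω) (hsq i2 ω) (hsq i3 ω) h1 h2
  have hkey2 : ∀ ω, F ω ^ 2 = 1 + (X i0 ω * X i2 ω + (4*(s*t)*(X i1 ω * X i3 ω)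
      + 4*(s*t)*(X i0 ω * (X i1 ω * (X i2 ω * X i3 ω))))) := by
    intro ω; rw [hF' ω, (hkey ω).1]; ring
  have hkey4 : ∀ ω, F ω ^ 4 = 3 + (3*(X i0 ω * X i2 ω) + (16*(s*t)*(X i1 ω * X i3 ω)
      + 16*(s*t)*(X i0 ω * (X i1 ω * (X i2 ω * X i3 ω))))) := by
    intro ω; rw [hF' ω, (hkey ω).2]; ring
  -- E[X i] = 0
  have hE1 : ∀ i, ∫ ω, X i ω ∂μ = 0 := by
    intro i
    have hA : MeasurableSet {ω | X i ω = 1} := (hXmeas i) (measurableSet_singleton 1)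
    have hXi : ∀ ω, X i ω = Set.indicator {ω | X i ω = 1} (fun _ => (2:ℝ)) ω - 1 := by
      intro ω
      by_cases h : X i ω = 1
      · norm_num [Set.indicator, Set.mem_setOf_eq, h]
      · rcases hval i ω with h' | h'
        · exact absurd h' h
        · norm_num [Set.indicator, Set.mem_setOf_eq, h, h']
    calc ∫ ω, X i ω ∂μ
        = ∫ ω, (Set.indicator {ω | X i ω = 1} (fun _ => (2:ℝ)) ω - 1) ∂μ := by
          exact integral_congr_ae (Filter.Eventually.of_forall hXi)
      _ = (∫ ω, Set.indicator {ω | X i ω = 1} (fun _ => (2:ℝ)) ω ∂μ) - ∫ _, (1:ℝ) ∂μ := by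
          apply integral_sub _ (integrable_const 1)
          exact (integrable_const (2:ℝ)).indicator hA
      _ = (μ {ω | X i ω = 1}).toReal • (2:ℝ) - 1 := by
          rw [integral_indicator_const (2:ℝ) hA]; simp; rfl
      _ = 0 := by rw [hP i]; norm_num
  -- products of distinct signs have zero mean
  have hprod0 : ∀ S : Finset (Fin n), S.Nonempty → ∫ ω, ∏ i ∈ S, X i ω ∂μ = 0 := by
    intro S hS
    obtain ⟨i, hi⟩ := hS
    have hind : IndepFun (∏ j ∈ S.erase i, X j) (X i) μ :=
      hindep.indepFun_finsetProd_of_notMem hXmeas (Finset.notMem_erase i S)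
    have hmeas : Measurable (∏ j ∈ S.erase i, X j) := by
      have : (∏ j ∈ S.erase i, X j) = fun ω => ∏ j ∈ S.erase i, X j ω :=
        funext fun ω => Finset.prod_apply ω _ X
      rw [this]
      exact Finset.measurable_prod _ (fun j _ => hXmeas j)
    have heq : ∀ ω, ∏ j ∈ S, X j ω = ((∏ j ∈ S.erase i, X j) * X i) ω := by
      intro ω
      rw [Pi.mul_apply, Finset.prod_apply, Finset.prod_erase_mul _ _ hi]
    calc ∫ ω, ∏ j ∈ S, X j ω ∂μ = ∫ ω, ((∏ j ∈ S.erase i, X j) * X i) ω ∂μ :=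
          integral_congr_ae (Filter.Eventually.of_forall heq)
      _ = (∫ ω, (∏ j ∈ S.erase i, X j) ω ∂μ) * ∫ ω, X i ω ∂μ :=
          hind.integral_mul_eq_mul_integral hmeas.aestronglyMeasurable (hXmeas i).aestronglyMeasurable
      _ = 0 := by rw [hE1 i, mul_zero]
  -- the three monomials
  have hu : ∫ ω, X i0 ω * X i2 ω ∂μ = 0 := by
    have := hprod0 {i0, i2} ⟨i0, Finset.mem_insert_self _ _⟩
    simp_rw [Finset.prod_pair h02] at this; exact this
  have hv : ∫ ω, X i1 ω * X i3 ω ∂μ = 0 := by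
    have := hprod0 {i1, i3} ⟨i1, Finset.mem_insert_self _ _⟩
    simp_rw [Finset.prod_pair h13] at this; exact this
  have hw : ∫ ω, X i0 ω * (X i1 ω * (X i2 ω * X i3 ω)) ∂μ = 0 := by
    have heq : ∀ ω, ∏ i ∈ ({i0, i1, i2, i3} : Finset (Fin n)), X i ω
        = X i0 ω * (X i1 ω * (X i2 ω * X i3 ω)) := by
      intro ω
      rw [Finset.prod_insert (show i0 ∉ ({i1, i2, i3} : Finset (Fin n)) by
            simp [h01, h02, h03]),
        Finset.prod_insert (show i1 ∉ ({i2, i3} : Finset (Fin n)) by simp [h12, h13]),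
        Finset.prod_insert (show i2 ∉ ({i3} : Finset (Fin n)) by simp [h23]),
        Finset.prod_singleton]
    have := hprod0 {i0, i1, i2, i3} ⟨i0, Finset.mem_insert_self _ _⟩
    simp_rw [heq] at this
    exact this
  -- integrability
  have hIbd : ∀ f : Ω → ℝ, Measurable f → (∀ ω, f ω = 1 ∨ f ω = -1) → Integrable f μ := by
    intro f hf hb
    apply (integrable_const (1:ℝ)).mono' hf.aestronglyMeasurable
    apply Filter.Eventually.of_forall
    intro ω; rcases hb ω with h | h <;> rw [h] <;> norm_num
  have hvalmul : ∀ (f g : Ω → ℝ), (∀ ω, f ω = 1 ∨ f ω = -1) → (∀ ω, g ω = 1 ∨ g ω = -1) →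
      ∀ ω, f ω * g ω = 1 ∨ f ω * g ω = -1 := by
    intro f g hf hg ω
    rcases hf ω with h | h <;> rcases hg ω with h' | h' <;> rw [h, h'] <;> norm_num
  have Iu : Integrable (fun ω => X i0 ω * X i2 ω) μ :=
    hIbd _ ((hXmeas i0).mul (hXmeas i2)) (hvalmul _ _ (hval i0) (hval i2))
  have Iv : Integrable (fun ω => X i1 ω * X i3 ω) μ :=
    hIbd _ ((hXmeas i1).mul (hXmeas i3)) (hvalmul _ _ (hval i1) (hval i3))
  have Iw : Integrable (fun ω => X i0 ω * (X i1 ω * (X i2 ω * X i3 ω))) μ := by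
    apply hIbd _ ((hXmeas i0).mul ((hXmeas i1).mul ((hXmeas i2).mul (hXmeas i3))))
    exact hvalmul _ _ (hval i0) (hvalmul _ _ (hval i1) (hvalmul _ _ (hval i2) (hval i3)))
  -- the general moment computation
  have hmom : ∀ (c0 c1 c2 c3 : ℝ),
      ∫ ω, (c0 + (c1 * (X i0 ω * X i2 ω) + (c2 * (X i1 ω * X i3 ω)
        + c3 * (X i0 ω * (X i1 ω * (X i2 ω * X i3 ω)))))) ∂μ = c0 := by
    intro c0 c1 c2 c3
    have I3 : Integrable (fun ω => c3 * (X i0 ω * (X i1 ω * (X i2 ω * X i3 ω)))) μ :=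
      Iw.const_mul c3
    have I2 : Integrable (fun ω => c2 * (X i1 ω * X i3 ω)
        + c3 * (X i0 ω * (X i1 ω * (X i2 ω * X i3 ω)))) μ := by
      exact (Iv.const_mul c2).add I3
    have I1 : Integrable (fun ω => c1 * (X i0 ω * X i2 ω) + (c2 * (X i1 ω * X i3 ω)
        + c3 * (X i0 ω * (X i1 ω * (X i2 ω * X i3 ω))))) μ := by
      exact (Iu.const_mul c1).add I2
    rw [integral_add (integrable_const c0) I1,
      integral_add (Iu.const_mul c1) I2,
      integral_add (Iv.const_mul c2) I3,
      integral_const_mul, integral_const_mul, integral_const_mul, hu, hv, hw]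
    simp
  refine ⟨?_, ?_, ?_, ?_⟩
  · calc ∫ ω, F ω ^ 2 ∂μ
        = ∫ ω, (1 + (1 * (X i0 ω * X i2 ω) + (4*(s*t) * (X i1 ω * X i3 ω)
            + 4*(s*t) * (X i0 ω * (X i1 ω * (X i2 ω * X i3 ω)))))) ∂μ :=
          integral_congr_ae (Filter.Eventually.of_forall (fun ω => by
            show F ω ^ 2 = _; rw [hkey2 ω]; ring))
      _ = 1 := hmom 1 1 (4*(s*t)) (4*(s*t))
  · calc ∫ ω, F ω ^ 4 ∂μ
        = ∫ ω, (3 + (3 * (X i0 ω * X i2 ω) + (16*(s*t) * (X i1 ω * X i3 ω)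
            + 16*(s*t) * (X i0 ω * (X i1 ω * (X i2 ω * X i3 ω)))))) ∂μ :=
          integral_congr_ae (Filter.Eventually.of_forall (fun ω => by
            show F ω ^ 4 = _; rw [hkey4 ω]))
      _ = 3 := hmom 3 3 (16*(s*t)) (16*(s*t))
  · -- finite range
    have : Set.range F ⊆ (fun p : ℝ × ℝ × ℝ × ℝ =>
        s*(p.1*p.2.1) + s*(p.2.1*p.2.2.1) + t*(p.2.2.1*p.2.2.2) + t*(p.2.2.2*p.1)) ''
        (({1, -1} : Set ℝ) ×ˢ ({1, -1} : Set ℝ) ×ˢ ({1, -1} : Set ℝ) ×ˢ ({1, -1} : Set ℝ)) := by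
      rintro x ⟨ω, rfl⟩
      refine ⟨(X i0 ω, X i1 ω, X i2 ω, X i3 ω), ?_, (hF' ω).symm⟩
      simp only [Set.mem_prod, Set.mem_insert_iff, Set.mem_singleton_iff]
      exact ⟨hval i0 ω, hval i1 ω, hval i2 ω, hval i3 ω⟩
    exact Set.Finite.subset (Set.Finite.image _
      (((Set.finite_singleton (-1)).insert 1).prod
        (((Set.finite_singleton (-1)).insert 1).prod
          (((Set.finite_singleton (-1)).insert 1).prod
            ((Set.finite_singleton (-1)).insert 1))))) this
  · -- not Gaussian
    intro m₀ v hv0 hcontra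
    have hFmeas : Measurable F := by
      have : F = fun ω => s*(X i0 ω * X i1 ω) + s*(X i1 ω * X i2 ω)
          + t*(X i2 ω * X i3 ω) + t*(X i3 ω * X i0 ω) := funext hF'
      rw [this]
      fun_prop
    have hfin : (Set.range F).Finite := by
      have : Set.range F ⊆ (fun p : ℝ × ℝ × ℝ × ℝ =>
          s*(p.1*p.2.1) + s*(p.2.1*p.2.2.1) + t*(p.2.2.1*p.2.2.2) + t*(p.2.2.2*p.1)) ''
          (({1, -1} : Set ℝ) ×ˢ ({1, -1} : Set ℝ) ×ˢ ({1, -1} : Set ℝ) ×ˢ ({1, -1} : Set ℝ)) := by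
        rintro x ⟨ω, rfl⟩
        refine ⟨(X i0 ω, X i1 ω, X i2 ω, X i3 ω), ?_, (hF' ω).symm⟩
        simp only [Set.mem_prod, Set.mem_insert_iff, Set.mem_singleton_iff]
        exact ⟨hval i0 ω, hval i1 ω, hval i2 ω, hval i3 ω⟩
      exact Set.Finite.subset (Set.Finite.image _
        (((Set.finite_singleton (-1)).insert 1).prod
          (((Set.finite_singleton (-1)).insert 1).prod
            (((Set.finite_singleton (-1)).insert 1).prod
              ((Set.finite_singleton (-1)).insert 1))))) this
    have hone : μ.map F (Set.range F) = 1 := by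
      rw [Measure.map_apply hFmeas hfin.measurableSet, Set.preimage_range, measure_univ]
    have hzero : gaussianReal m₀ v (Set.range F) = 0 :=
      gaussianReal_absolutelyContinuous m₀ hv0 (hfin.measure_zero volume)
    rw [hcontra, hzero] at hone
    exact one_ne_zero hone.symm
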